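/- arXiv:2405.01902 — 4 statements merged into one kernel-verified Lean document; each statement's English description precedes it below -/
import Mathlib

section
/- Let (ξ_i)_{i∈ℤ} be an independent sequence of random variables and (ξ'_i)_{i∈ℤ} an independent copy of it. For I, J ⊂ ℤ write ℱ_I = σ(ξ_i, i∈I) and ℱ'_J = σ(ξ'_j, j∈J). Then for every integrable random variable Y and all subsets I₁, I₂, J₁, J₂ of ℤ, E[ E[Y | ℱ_{I₁} ∨ ℱ'_{J₁}] | ℱ_{I₂} ∨ ℱ'_{J₂} ] = E[Y | ℱ_{I₁∩I₂} ∨ ℱ'_{J₁∩J₂}] almost surely. -/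
open MeasureTheory ProbabilityTheory

/-- If `A` is `m₃`-measurable, `B` is `m₂`-measurable, `h` is integrable and
`m₁`-strongly measurable, `m₃ ≤ m₁` and `Indep m₁ m₂ μ`, then
`∫_{A∩B} h = (∫_A h) * μ(B)`. -/
theorem setIntegral_inter_indep {Ω : Type*} {m₁ m₂ m₃ m0 : MeasurableSpace Ω}
    {μ : Measure Ω} [IsProbabilityMeasure μ]
    (hle₁ : m₁ ≤ m0) (hle₂ : m₂ ≤ m0) (hle₃ : m₃ ≤ m₁)
    (hindep : Indep m₁ m₂ μ)
    {h : Ω → ℝ} (hhi : Integrable h μ) (hhm : StronglyMeasurable[m₁] h)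
    {A B : Set Ω} (hA : MeasurableSet[m₃] A) (hB : MeasurableSet[m₂] B) :
    ∫ x in A ∩ B, h x ∂μ = (∫ x in A, h x ∂μ) * (μ B).toReal := by
  have hA₁ : MeasurableSet[m₁] A := hle₃ _ hA
  have hA₀ : MeasurableSet A := hle₁ _ hA₁
  have hB₀ : MeasurableSet B := hle₂ _ hB
  have hind : IndepFun (A.indicator h) (B.indicator (fun _ => (1 : ℝ))) μ := by
    rw [IndepFun_iff_Indep]
    refine indep_of_indep_of_le_right (indep_of_indep_of_le_left hindep ?_) ?_
    · exact ((hhm.indicator hA₁).measurable).comap_le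
    · exact ((@measurable_const ℝ Ω _ m₂ 1).indicator hB).comap_le
  have hint1 : Integrable (A.indicator h) μ := hhi.indicator hA₀
  have hint2 : Integrable (B.indicator (fun _ => (1 : ℝ))) μ :=
    (integrable_const (1 : ℝ)).indicator hB₀
  have hmul := IndepFun.integral_mul_eq_mul_integral hind hint1.aestronglyMeasurable hint2.aestronglyMeasurable
  have heq : A.indicator h * B.indicator (fun _ => (1 : ℝ)) = (A ∩ B).indicator h := by
    funext x
    by_cases hxA : x ∈ A <;> by_cases hxB : x ∈ B <;>
      simp [Set.indicator_apply, hxA, hxB]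
  rw [heq] at hmul
  rw [← integral_indicator (hA₀.inter hB₀), hmul, integral_indicator hA₀,
    integral_indicator hB₀]
  simp [measureReal_def]

/-- If `f` is `m₁`-measurable, `m₃ ≤ m₁` and `Indep m₁ m₂ μ`, then
`E[f | m₃ ⊔ m₂] = E[f | m₃]` a.e. -/
theorem condexp_sup_indep_eq {Ω : Type*} {m₁ m₂ m₃ m0 : MeasurableSpace Ω}
    {μ : Measure Ω} [IsProbabilityMeasure μ]
    (hle₁ : m₁ ≤ m0) (hle₂ : m₂ ≤ m0) (hle₃ : m₃ ≤ m₁)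
    {f : Ω → ℝ} (hf : Integrable f μ) (hfm : StronglyMeasurable[m₁] f)
    (hindep : Indep m₁ m₂ μ) :
    μ[f | m₃ ⊔ m₂] =ᵐ[μ] μ[f | m₃] := by
  have hle₃0 : m₃ ≤ m0 := hle₃.trans hle₁
  have hsup : m₃ ⊔ m₂ ≤ m0 := sup_le hle₃0 hle₂
  haveI : SigmaFinite (μ.trim hsup) := by
    exact @IsFiniteMeasure.toSigmaFinite _ _ _ (isFiniteMeasure_trim hsup)
  haveI : SigmaFinite (μ.trim hle₃0) := by
    exact @IsFiniteMeasure.toSigmaFinite _ _ _ (isFiniteMeasure_trim hle₃0)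
  set g := μ[f | m₃] with hg
  have hgi : Integrable g μ := integrable_condExp
  have hgm₁ : StronglyMeasurable[m₁] g := stronglyMeasurable_condExp.mono hle₃
  -- the generating π-system of `m₃ ⊔ m₂`
  set C : Set (Set Ω) :=
    {s | ∃ A B, MeasurableSet[m₃] A ∧ MeasurableSet[m₂] B ∧ s = A ∩ B} with hC
  have h_gen : m₃ ⊔ m₂ = MeasurableSpace.generateFrom C := by
    refine le_antisymm (sup_le ?_ ?_) (MeasurableSpace.generateFrom_le ?_)
    · intro t ht
      exact MeasurableSpace.measurableSet_generateFrom
        ⟨t, Set.univ, ht, MeasurableSet.univ, (Set.inter_univ t).symm⟩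
    · intro t ht
      exact MeasurableSpace.measurableSet_generateFrom
        ⟨Set.univ, t, MeasurableSet.univ, ht, (Set.univ_inter t).symm⟩
    · rintro t ⟨A, B, hA, hB, rfl⟩
      exact MeasurableSet.inter (le_sup_left (a := m₃) (b := m₂) _ hA)
        (le_sup_right (a := m₃) (b := m₂) _ hB)
  have h_pi : IsPiSystem C := by
    rintro s ⟨A₁, B₁, hA₁, hB₁, rfl⟩ t ⟨A₂, B₂, hA₂, hB₂, rfl⟩ -
    exact ⟨A₁ ∩ A₂, B₁ ∩ B₂, hA₁.inter hA₂, hB₁.inter hB₂, by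
      ext x; simp [Set.mem_inter_iff]; tauto⟩
  -- set-integral equality on all of `m₃ ⊔ m₂`
  have hkey : ∀ s : Set Ω, MeasurableSet[m₃ ⊔ m₂] s →
      ∫ x in s, g x ∂μ = ∫ x in s, f x ∂μ := by
    refine @MeasurableSpace.induction_on_inter Ω (m₃ ⊔ m₂)
      (fun s _ => ∫ x in s, g x ∂μ = ∫ x in s, f x ∂μ) C h_gen h_pi ?_ ?_ ?_ ?_
    · simp
    · rintro t ⟨A, B, hA, hB, rfl⟩
      rw [setIntegral_inter_indep hle₁ hle₂ hle₃ hindep hf hfm hA hB,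
        setIntegral_inter_indep hle₁ hle₂ hle₃ hindep hgi hgm₁ hA hB,
        setIntegral_condExp hle₃0 hf hA]
    · intro t ht h_eq
      have ht₀ : MeasurableSet t := hsup _ ht
      have h₁ := integral_add_compl ht₀ hgi
      have h₂ := integral_add_compl ht₀ hf
      have h₃ : ∫ x, g x ∂μ = ∫ x, f x ∂μ := integral_condExp hle₃0 (f := f)
      linarith
    · intro u hdisj humeas h_eq
      have hu₀ : ∀ i, MeasurableSet (u i) := fun i => hsup _ (humeas i)
      rw [integral_iUnion hu₀ hdisj hf.integrableOn,
        integral_iUnion hu₀ hdisj hgi.integrableOn]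
      exact tsum_congr h_eq
  refine (ae_eq_condExp_of_forall_setIntegral_eq hsup hf
    (fun s _ _ => hgi.integrableOn) (fun s hs _ => hkey s hs) ?_).symm
  exact StronglyMeasurable.aestronglyMeasurable (μ := μ)
    ((stronglyMeasurable_condExp (m := m₃) (μ := μ) (f := f)).mono (le_sup_left (b := m₂)))

/-- For an independent sequence `(ξ_i)` with independent copy `(ξ'_i)` and
`ℱ_I = σ(ξ_i, i ∈ I)`, `ℱ'_J = σ(ξ'_j, j ∈ J)`, one has
`E[E[Y | ℱ_{I₁} ⊔ ℱ'_{J₁}] | ℱ_{I₂} ⊔ ℱ'_{J₂}] = E[Y | ℱ_{I₁∩I₂} ⊔ ℱ'_{J₁∩J₂}]` a.s. -/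
theorem stmt1 {Ω S : Type*} [mΩ : MeasurableSpace Ω] [MeasurableSpace S]
    {P : Measure Ω} [IsProbabilityMeasure P]
    (ξ ξ' : ℤ → Ω → S)
    (hmeas : ∀ i, Measurable (ξ i)) (hmeas' : ∀ i, Measurable (ξ' i))
    (hindep : iIndepFun (β := fun _ : ℤ ⊕ ℤ => S) (Sum.elim ξ ξ') P)
    (hcopy : IdentDistrib (fun ω (i : ℤ) => ξ i ω) (fun ω (i : ℤ) => ξ' i ω) P P)
    (Y : Ω → ℝ) (hY : Integrable Y P)
    (I₁ I₂ J₁ J₂ : Set ℤ) :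
    P[ P[Y | (⨆ i ∈ I₁, MeasurableSpace.comap (ξ i) inferInstance) ⊔ (⨆ j ∈ J₁, MeasurableSpace.comap (ξ' j) inferInstance)]
      | (⨆ i ∈ I₂, MeasurableSpace.comap (ξ i) inferInstance) ⊔ (⨆ j ∈ J₂, MeasurableSpace.comap (ξ' j) inferInstance)]
    =ᵐ[P]
    P[Y | (⨆ i ∈ I₁ ∩ I₂, MeasurableSpace.comap (ξ i) inferInstance)
          ⊔ (⨆ j ∈ J₁ ∩ J₂, MeasurableSpace.comap (ξ' j) inferInstance)] := by
  classical
  set s : ℤ ⊕ ℤ → MeasurableSpace Ω :=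
    fun k => MeasurableSpace.comap (Sum.elim ξ ξ' k) inferInstance with hs
  have hs_le : ∀ k, s k ≤ mΩ := by
    rintro (i | j)
    · exact (hmeas i).comap_le
    · exact (hmeas' j).comap_le
  have hiIndep : iIndep s P := hindep
  have hG : ∀ I J : Set ℤ,
      (⨆ i ∈ I, MeasurableSpace.comap (ξ i) inferInstance) ⊔
        (⨆ j ∈ J, MeasurableSpace.comap (ξ' j) inferInstance)
      = ⨆ k ∈ (Sum.inl '' I ∪ Sum.inr '' J : Set (ℤ ⊕ ℤ)), s k := by
    intro I J
    rw [iSup_union, iSup_image, iSup_image]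
    rfl
  set K₁ : Set (ℤ ⊕ ℤ) := Sum.inl '' I₁ ∪ Sum.inr '' J₁ with hK₁
  set K₂ : Set (ℤ ⊕ ℤ) := Sum.inl '' I₂ ∪ Sum.inr '' J₂ with hK₂
  set KA : Set (ℤ ⊕ ℤ) := Sum.inl '' (I₁ ∩ I₂) ∪ Sum.inr '' (J₁ ∩ J₂) with hKA
  have hKAeq : KA = K₁ ∩ K₂ := by
    ext (i | j) <;> simp [hKA, hK₁, hK₂]
  set KC : Set (ℤ ⊕ ℤ) := K₂ \ K₁ with hKC
  have hK₂eq : K₂ = KA ∪ KC := by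
    rw [hKAeq, hKC]
    rw [Set.inter_comm, Set.inter_union_diff]
  have hG₂ : (⨆ k ∈ K₂, s k) = (⨆ k ∈ KA, s k) ⊔ (⨆ k ∈ KC, s k) := by
    rw [hK₂eq, iSup_union]
  have hdisj : Disjoint K₁ KC := Set.disjoint_sdiff_right
  have hindepG : Indep (⨆ k ∈ K₁, s k) (⨆ k ∈ KC, s k) P :=
    indep_iSup_of_disjoint hs_le hiIndep hdisj
  have hle₁ : (⨆ k ∈ K₁, s k) ≤ mΩ := iSup₂_le fun k _ => hs_le k
  have hleC : (⨆ k ∈ KC, s k) ≤ mΩ := iSup₂_le fun k _ => hs_le k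
  have hleA₁ : (⨆ k ∈ KA, s k) ≤ ⨆ k ∈ K₁, s k := by
    refine iSup₂_le fun k hk => ?_
    have : k ∈ K₁ := (hKAeq ▸ hk).1
    exact le_iSup₂ (f := fun k (_ : k ∈ K₁) => s k) k this
  have hleA : (⨆ k ∈ KA, s k) ≤ mΩ := hleA₁.trans hle₁
  rw [hG I₁ J₁, hG I₂ J₂, hG (I₁ ∩ I₂) (J₁ ∩ J₂), hG₂]
  haveI : SigmaFinite (P.trim hle₁) := by
    exact @IsFiniteMeasure.toSigmaFinite _ _ _ (isFiniteMeasure_trim hle₁)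
  have h1 : P[ P[Y | ⨆ k ∈ K₁, s k] | (⨆ k ∈ KA, s k) ⊔ (⨆ k ∈ KC, s k)]
      =ᵐ[P] P[ P[Y | ⨆ k ∈ K₁, s k] | ⨆ k ∈ KA, s k] :=
    condexp_sup_indep_eq hle₁ hleC hleA₁ integrable_condExp
      stronglyMeasurable_condExp hindepG
  have h2 : P[ P[Y | ⨆ k ∈ K₁, s k] | ⨆ k ∈ KA, s k] =ᵐ[P] P[Y | ⨆ k ∈ KA, s k] :=
    condExp_condExp_of_le hleA₁ hle₁
  exact h1.trans h2
end

section
/- Hoeffding projections sum to the kernel: let (ξ_i) be i.i.d. random variables with values in S, h : S^m → B Bochner-integrable, and for I ⊆ {1,…,m} define h^I(ξ_I) = ∑_{J ⊆ I} (−1)^{|I|−|J|} E[h(ξ₁,…,ξ_m) | ξ_j, j ∈ J] (with E[·|ξ_∅] = E[·]). Then ∑_{I ⊆ {1,…,m}} h^I(ξ_I) = h(ξ₁,…,ξ_m) almost surely. -/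
open MeasureTheory ProbabilityTheory Finset

lemma coefR {m : ℕ} (J : Finset (Fin m)) :
    ∑ I ∈ univ.filter (fun I => J ⊆ I), ((-1 : ℝ)) ^ (I.card - J.card)
      = if J = univ then 1 else 0 := by
  classical
  have key : ∑ I ∈ univ.filter (fun I => J ⊆ I), ((-1 : ℝ)) ^ (I.card - J.card)
      = ∑ K ∈ Jᶜ.powerset, ((-1 : ℝ)) ^ K.card := by
    refine Finset.sum_nbij' (fun I => I \ J) (fun K => K ∪ J) ?_ ?_ ?_ ?_ ?_
    · intro I hI
      simp only [Finset.mem_powerset]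
      intro x hx
      simp only [Finset.mem_sdiff] at hx
      simp [Finset.mem_compl, hx.2]
    · intro K _
      simp only [mem_filter, mem_univ, true_and]
      exact Finset.subset_union_right
    · intro I hI
      simp only [mem_filter, mem_univ, true_and] at hI
      exact Finset.sdiff_union_of_subset hI
    · intro K hK
      simp only [Finset.mem_powerset] at hK
      have hd : Disjoint K J := Finset.disjoint_left.mpr fun a ha =>
        Finset.mem_compl.1 (hK ha)
      rw [Finset.union_sdiff_right, Finset.sdiff_eq_self_of_disjoint hd]
    · intro I hI
      simp only [mem_filter, mem_univ, true_and] at hI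
      rw [Finset.card_sdiff_of_subset hI]
  have hZ := @Finset.sum_powerset_neg_one_pow_card (Fin m) _ Jᶜ
  have hcast : ∑ K ∈ Jᶜ.powerset, ((-1 : ℝ)) ^ K.card
      = ((∑ K ∈ Jᶜ.powerset, ((-1 : ℤ)) ^ K.card : ℤ) : ℝ) := by push_cast; rfl
  rw [key, hcast, hZ]
  by_cases hJ : J = univ <;> simp [hJ, Finset.compl_eq_empty_iff]

/-- Hoeffding projections sum to the kernel: with
`h^I(ξ_I) = ∑_{J ⊆ I} (-1)^{|I|-|J|} E[h(ξ_0,…,ξ_{m-1}) | ξ_j, j ∈ J]`,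
one has `∑_{I ⊆ {0,…,m-1}} h^I(ξ_I) = h(ξ_0,…,ξ_{m-1})` a.s. -/
theorem stmt7 {Ω S B : Type*} [mΩ : MeasurableSpace Ω] [MeasurableSpace S]
    [NormedAddCommGroup B] [NormedSpace ℝ B] [CompleteSpace B]
    {P : Measure Ω} [IsProbabilityMeasure P]
    (m : ℕ) (ξ : ℕ → Ω → S) (hmeas : ∀ i, Measurable (ξ i))
    (hindep : iIndepFun ξ P)
    (hid : ∀ i, IdentDistrib (ξ i) (ξ 0) P P)
    (h : (Fin m → S) → B) (hmeas_h : StronglyMeasurable h)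
    (hint : Integrable (fun ω => h (fun k => ξ k ω)) P) :
    ∀ᵐ ω ∂P,
      ∑ I : Finset (Fin m), ∑ J ∈ I.powerset,
        ((-1 : ℝ) ^ (I.card - J.card)) •
          (P[(fun ω => h (fun k => ξ k ω))
              | ⨆ j ∈ J, MeasurableSpace.comap (ξ (j : ℕ)) inferInstance]) ω
      = h (fun k => ξ k ω) := by
  classical
  set f : Ω → B := fun ω => h (fun k => ξ k ω) with hf
  set G : Finset (Fin m) → MeasurableSpace Ω :=
    fun J => ⨆ j ∈ J, MeasurableSpace.comap (ξ (j : ℕ)) inferInstance with hG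
  have hm : G univ ≤ mΩ := by
    refine iSup₂_le fun j _ => (hmeas j).comap_le
  haveI : SigmaFinite (P.trim hm) := inferInstance
  have hsm : StronglyMeasurable[G univ] f := by
    letI : MeasurableSpace Ω := G univ
    refine hmeas_h.comp_measurable ?_
    rw [measurable_pi_iff]
    intro k
    exact Measurable.of_comap_le
      (le_iSup₂ (f := fun (j : Fin m) (_ : j ∈ univ) =>
        MeasurableSpace.comap (ξ (j : ℕ)) inferInstance) k (mem_univ k))
  have heq : P[f | G univ] = f := condExp_of_stronglyMeasurable hm hsm hint
  refine Filter.Eventually.of_forall fun ω => ?_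
  have hswap :
      ∑ I : Finset (Fin m), ∑ J ∈ I.powerset,
          ((-1 : ℝ) ^ (I.card - J.card)) • (P[f | G J]) ω
        = ∑ J : Finset (Fin m), ∑ I ∈ univ.filter (fun I => J ⊆ I),
          ((-1 : ℝ) ^ (I.card - J.card)) • (P[f | G J]) ω := by
    refine Finset.sum_comm' ?_
    intro I J
    simp [Finset.mem_powerset]
  calc ∑ I : Finset (Fin m), ∑ J ∈ I.powerset,
          ((-1 : ℝ) ^ (I.card - J.card)) • (P[f | G J]) ω
      = ∑ J : Finset (Fin m),
          (∑ I ∈ univ.filter (fun I => J ⊆ I), ((-1 : ℝ)) ^ (I.card - J.card))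
            • (P[f | G J]) ω := by
        rw [hswap]; exact Finset.sum_congr rfl fun J _ => (Finset.sum_smul).symm
    _ = ∑ J : Finset (Fin m),
          (if J = univ then (1:ℝ) else 0) • (P[f | G J]) ω := by
        exact Finset.sum_congr rfl fun J _ => by rw [coefR]
    _ = (P[f | G univ]) ω := by
        simp [ite_smul]
    _ = f ω := by rw [heq]
end

section
/- Each Hoeffding projection is degenerate: with the notation of the Hoeffding decomposition, for every nonempty I ⊆ {1,…,m} and every ℓ₀ ∈ I, E[h^I(ξ_I) | ξ_j, j ∈ I∖{ℓ₀}] = 0 almost surely, where h^I(ξ_I) = ∑_{J ⊆ I} (−1)^{|I|−|J|} E[h(ξ₁,…,ξ_m) | ξ_j, j ∈ J]. -/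
open MeasureTheory ProbabilityTheory Finset MeasurableSpace

/-- If `f` is `𝔪₁`-measurable and integrable, `𝔫 ≤ 𝔪₁`, and `𝔪₂` is independent of `𝔪₁`,
then `E[f | 𝔫 ⊔ 𝔪₂] = E[f | 𝔫]` a.e. -/
lemma condexp_sup_indep_aux {Ω B : Type*}
    [NormedAddCommGroup B] [NormedSpace ℝ B] [CompleteSpace B]
    {𝔫 𝔪₁ 𝔪₂ m0 : MeasurableSpace Ω}
    {μ : Measure Ω} [IsProbabilityMeasure μ]
    (h𝔫 : 𝔫 ≤ 𝔪₁) (h1 : 𝔪₁ ≤ m0) (h2 : 𝔪₂ ≤ m0)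
    (hindep : Indep 𝔪₁ 𝔪₂ μ) {f : Ω → B} (hf : StronglyMeasurable[𝔪₁] f)
    (hfint : Integrable f μ) :
    μ[f | 𝔫 ⊔ 𝔪₂] =ᵐ[μ] μ[f | 𝔫] := by
  have hm' : 𝔫 ⊔ 𝔪₂ ≤ m0 := sup_le (h𝔫.trans h1) h2
  have h𝔫0 : 𝔫 ≤ m0 := h𝔫.trans h1
  set g : Ω → B := μ[f | 𝔫] with hg
  have hgint : Integrable g μ := integrable_condExp
  have hgsm : StronglyMeasurable[𝔫] g := stronglyMeasurable_condExp
  -- set integral equality on all (𝔫 ⊔ 𝔪₂)-measurable sets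
  have key : ∀ s : Set Ω, MeasurableSet[𝔫 ⊔ 𝔪₂] s → ∫ x in s, g x ∂μ = ∫ x in s, f x ∂μ := by
    have h_eq : (𝔫 ⊔ 𝔪₂) = MeasurableSpace.generateFrom
        {s : Set Ω | ∃ t u, MeasurableSet[𝔫] t ∧ MeasurableSet[𝔪₂] u ∧ s = t ∩ u} := by
      refine le_antisymm (sup_le ?_ ?_) (MeasurableSpace.generateFrom_le ?_)
      · intro t ht
        exact measurableSet_generateFrom ⟨t, Set.univ, ht, MeasurableSet.univ,
          (Set.inter_univ t).symm⟩
      · intro u hu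
        exact measurableSet_generateFrom ⟨Set.univ, u, MeasurableSet.univ, hu,
          (Set.univ_inter u).symm⟩
      · rintro s ⟨t, u, ht, hu, rfl⟩
        exact (((le_sup_left : 𝔫 ≤ 𝔫 ⊔ 𝔪₂) t ht).inter ((le_sup_right : 𝔪₂ ≤ 𝔫 ⊔ 𝔪₂) u hu))
    have h_pi : IsPiSystem
        {s : Set Ω | ∃ t u, MeasurableSet[𝔫] t ∧ MeasurableSet[𝔪₂] u ∧ s = t ∩ u} := by
      rintro s₁ ⟨t₁, u₁, ht₁, hu₁, rfl⟩ s₂ ⟨t₂, u₂, ht₂, hu₂, rfl⟩ -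
      exact ⟨t₁ ∩ t₂, u₁ ∩ u₂, ht₁.inter ht₂, hu₁.inter hu₂, by
        ext x; simp; tauto⟩
    intro s hs
    refine MeasurableSpace.induction_on_inter (m := 𝔫 ⊔ 𝔪₂) (C := fun s _ => ∫ x in s, g x ∂μ = ∫ x in s, f x ∂μ) h_eq h_pi ?_ ?_ ?_ ?_ s hs
    · simp
    · rintro s ⟨t, u, ht, hu, rfl⟩
      -- key computation using independence
      have htm0 : MeasurableSet t := h𝔫0 t ht
      have hum0 : MeasurableSet u := h2 u hu
      have comp : ∀ (φ : Ω → B), StronglyMeasurable[𝔪₁] φ → Integrable φ μ →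
          (∫ x in t ∩ u, φ x ∂μ) = (μ u).toReal • ∫ x in t, φ x ∂μ := by
        intro φ hφm hφint
        have hind : StronglyMeasurable[𝔪₁] (t.indicator φ) :=
          hφm.indicator (h𝔫 t ht)
        have hindint : Integrable (t.indicator φ) μ := hφint.indicator htm0
        have hce : μ[t.indicator φ | 𝔪₂] =ᵐ[μ] fun _ => μ[t.indicator φ] :=
          condExp_indep_eq h1 h2 hind hindep
        calc ∫ x in t ∩ u, φ x ∂μ = ∫ x in u, (t.indicator φ) x ∂μ := by
              rw [setIntegral_indicator htm0, Set.inter_comm]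
          _ = ∫ x in u, (μ[t.indicator φ | 𝔪₂]) x ∂μ :=
              (setIntegral_condExp h2 hindint hu).symm
          _ = ∫ x in u, (fun _ => μ[t.indicator φ]) x ∂μ :=
              setIntegral_congr_ae hum0 (hce.mono fun x hx _ => hx)
          _ = (μ u).toReal • μ[t.indicator φ] := by
              rw [setIntegral_const]; rfl
          _ = (μ u).toReal • ∫ x in t, φ x ∂μ := by
              rw [integral_indicator htm0]
      rw [comp g (hgsm.mono h𝔫) hgint, comp f hf hfint,
        setIntegral_condExp h𝔫0 hfint ht]
    · intro s hsm hs
      have hsm0 : MeasurableSet s := hm' s hsm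
      have h1' := integral_add_compl hsm0 hgint
      have h2' := integral_add_compl hsm0 hfint
      have htot : ∫ x, g x ∂μ = ∫ x, f x ∂μ := integral_condExp h𝔫0
      rw [← h1', ← h2', hs] at htot
      exact add_left_cancel htot
    · intro t hd hm ht
      have hm0 : ∀ i, MeasurableSet (t i) := fun i => hm' _ (hm i)
      rw [integral_iUnion hm0 hd hgint.integrableOn,
        integral_iUnion hm0 hd hfint.integrableOn]
      exact tsum_congr ht
  exact (ae_eq_condExp_of_forall_setIntegral_eq hm' hfint
    (fun s _ _ => hgint.integrableOn) (fun s hs _ => key s hs)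
    (StronglyMeasurable.aestronglyMeasurable (μ := μ) (hgsm.mono (le_sup_left : 𝔫 ≤ 𝔫 ⊔ 𝔪₂)))).symm

/-- Each Hoeffding projection is degenerate: for nonempty `I ⊆ {0,…,m-1}` and `ℓ₀ ∈ I`,
`E[h^I(ξ_I) | ξ_j, j ∈ I∖{ℓ₀}] = 0` a.s., where
`h^I(ξ_I) = ∑_{J ⊆ I} (-1)^{|I|-|J|} E[h(ξ_0,…,ξ_{m-1}) | ξ_j, j ∈ J]`. -/
theorem stmt8 {Ω S B : Type*} [mΩ : MeasurableSpace Ω] [MeasurableSpace S]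
    [NormedAddCommGroup B] [NormedSpace ℝ B] [CompleteSpace B]
    {P : Measure Ω} [IsProbabilityMeasure P]
    (m : ℕ) (ξ : ℕ → Ω → S) (hmeas : ∀ i, Measurable (ξ i))
    (hindep : iIndepFun ξ P)
    (hid : ∀ i, IdentDistrib (ξ i) (ξ 0) P P)
    (h : (Fin m → S) → B) (hmeas_h : StronglyMeasurable h)
    (hint : Integrable (fun ω => h (fun k => ξ k ω)) P)
    (I : Finset (Fin m)) (hI : I.Nonempty) (ℓ₀ : Fin m) (hℓ₀ : ℓ₀ ∈ I) :
    P[(fun ω => ∑ J ∈ I.powerset,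
        ((-1 : ℝ) ^ (I.card - J.card)) •
          (P[(fun ω => h (fun k => ξ k ω))
              | ⨆ j ∈ J, MeasurableSpace.comap (ξ (j : ℕ)) inferInstance]) ω)
      | ⨆ j ∈ I.erase ℓ₀, MeasurableSpace.comap (ξ (j : ℕ)) inferInstance]
    =ᵐ[P] 0 := by
  classical
  set F : Ω → B := fun ω => h (fun k => ξ k ω) with hF
  set 𝔪 : Finset (Fin m) → MeasurableSpace Ω :=
    fun T => ⨆ j ∈ T, MeasurableSpace.comap (ξ (j : ℕ)) inferInstance with h𝔪def
  set K : Finset (Fin m) := I.erase ℓ₀ with hK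
  have h𝔪le : ∀ T, 𝔪 T ≤ mΩ := fun T => iSup₂_le fun j _ => (hmeas (j : ℕ)).comap_le
  have h𝔪mono : ∀ {A T : Finset (Fin m)}, A ⊆ T → 𝔪 A ≤ 𝔪 T := by
    intro A T hAT
    exact iSup₂_le fun j hj => le_iSup₂ (f := fun (j : Fin m) (_ : j ∈ T) =>
      MeasurableSpace.comap (ξ (j : ℕ)) inferInstance) j (hAT hj)
  -- independence of the σ-algebras generated by disjoint blocks
  have hiI : iIndep (fun i : ℕ => MeasurableSpace.comap (ξ i) inferInstance) P :=
    hindep.iIndep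
  have himg : ∀ A : Finset (Fin m),
      𝔪 A = ⨆ i ∈ (Fin.val '' (A : Set (Fin m)) : Set ℕ),
        MeasurableSpace.comap (ξ i) inferInstance := by
    intro A
    rw [iSup_image]
    simp [h𝔪def]
  have hindep_finsets : ∀ (A T : Finset (Fin m)), Disjoint A T → Indep (𝔪 A) (𝔪 T) P := by
    intro A T hAT
    rw [himg A, himg T]
    refine indep_iSup_of_disjoint (fun i => (hmeas i).comap_le) hiI ?_
    exact (Set.disjoint_image_of_injective Fin.val_injective)
      (Finset.disjoint_coe.mpr hAT)
  have hsup : ∀ (A T : Finset (Fin m)), 𝔪 (A ∪ T) = 𝔪 A ⊔ 𝔪 T := by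
    intro A T
    simp only [h𝔪def, ← Finset.sup_eq_iSup]
    exact Finset.sup_union
  -- the double conditional expectation identity
  have hdouble : ∀ J : Finset (Fin m), J ⊆ I →
      P[P[F | 𝔪 J] | 𝔪 K] =ᵐ[P] P[F | 𝔪 (J.erase ℓ₀)] := by
    intro J hJ
    have hJK : (J.erase ℓ₀) ∪ (K \ J) = K := by
      ext x
      simp only [Finset.mem_union, Finset.mem_erase, Finset.mem_sdiff, hK]
      constructor
      · rintro (⟨hne, hxJ⟩ | ⟨hx, _⟩)
        · exact ⟨hne, hJ hxJ⟩
        · exact hx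
      · intro hx
        by_cases hxJ : x ∈ J
        · exact Or.inl ⟨hx.1, hxJ⟩
        · exact Or.inr ⟨hx, hxJ⟩
    have h1 : 𝔪 (J.erase ℓ₀) ≤ 𝔪 J := h𝔪mono (Finset.erase_subset _ _)
    have h2 : 𝔪 K = 𝔪 (J.erase ℓ₀) ⊔ 𝔪 (K \ J) := by rw [← hsup, hJK]
    rw [h2]
    exact (condexp_sup_indep_aux h1 (h𝔪le J) (h𝔪le (K \ J))
      (hindep_finsets _ _ Finset.disjoint_sdiff) stronglyMeasurable_condExp
      integrable_condExp).trans (condExp_condExp_of_le h1 (h𝔪le J))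
  -- rewrite the integrand as a finite sum of functions
  have hfun : (fun ω => ∑ J ∈ I.powerset,
      ((-1 : ℝ) ^ (I.card - J.card)) • (P[F | 𝔪 J]) ω)
      = ∑ J ∈ I.powerset, ((-1 : ℝ) ^ (I.card - J.card)) • P[F | 𝔪 J] := by
    ext ω
    simp [Finset.sum_apply]
  rw [hfun]
  have hintegrable : ∀ J ∈ I.powerset,
      Integrable (((-1 : ℝ) ^ (I.card - J.card)) • P[F | 𝔪 J]) P :=
    fun J _ => integrable_condExp.smul _
  refine (condExp_finsetSum hintegrable _).trans ?_
  have hterm : ∀ J ∈ I.powerset,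
      P[((-1 : ℝ) ^ (I.card - J.card)) • P[F | 𝔪 J] | 𝔪 K]
        =ᵐ[P] ((-1 : ℝ) ^ (I.card - J.card)) • P[F | 𝔪 (J.erase ℓ₀)] := by
    intro J hJ
    rw [Finset.mem_powerset] at hJ
    exact (condExp_smul _ _ _).trans ((hdouble J hJ).const_smul _)
  refine (eventuallyEq_sum hterm).trans ?_
  -- the alternating sum cancels
  have hzero : (∑ J ∈ I.powerset,
      ((-1 : ℝ) ^ (I.card - J.card)) • P[F | 𝔪 (J.erase ℓ₀)]) = 0 := by
    have hnot : ℓ₀ ∉ I.erase ℓ₀ := Finset.notMem_erase _ _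
    rw [show I.powerset = (insert ℓ₀ (I.erase ℓ₀)).powerset by
      rw [Finset.insert_erase hℓ₀], Finset.sum_powerset_insert hnot,
      ← Finset.sum_add_distrib]
    refine Finset.sum_eq_zero fun A hA => ?_
    rw [Finset.mem_powerset] at hA
    have hℓA : ℓ₀ ∉ A := fun hmem => hnot (hA hmem)
    have hAlt : A.card < I.card := by
      have := Finset.card_le_card hA
      have h1 : (I.erase ℓ₀).card = I.card - 1 := Finset.card_erase_of_mem hℓ₀
      have h2 : 0 < I.card := Finset.card_pos.mpr hI
      omega
    rw [Finset.erase_insert hℓA, Finset.erase_eq_of_notMem hℓA,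
      Finset.card_insert_of_notMem hℓA, ← add_smul]
    have hc : ((-1 : ℝ) ^ (I.card - A.card) + (-1 : ℝ) ^ (I.card - (A.card + 1))) = 0 := by
      have hn : I.card - A.card = (I.card - (A.card + 1)) + 1 := by omega
      rw [hn, pow_succ]
      ring
    rw [hc, zero_smul]
  rw [hzero]
end

section
/- Rosenthal-type inequality for sums of independent nonnegative random variables: for every s ≥ 1 there exists a constant K_s such that for any finite family (X_i)_{i∈I} of independent nonnegative random variables, E[ (∑_{i∈I} X_i)^s ] ≤ K_s (∑_{i∈I} E[X_i])^s + K_s ∑_{i∈I} E[X_i^s]. -/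
open MeasureTheory ProbabilityTheory
open scoped ENNReal NNReal

lemma aux_two_rpow {p : ℝ} (hp : 0 ≤ p) (a b : ℝ≥0∞) :
    (a + b) ^ p ≤ 2 ^ p * (a ^ p + b ^ p) := by
  rcases le_total 1 p with h1 | h1
  · refine (ENNReal.rpow_add_le_mul_rpow_add_rpow a b h1).trans ?_
    exact mul_le_mul_left (ENNReal.rpow_le_rpow_of_exponent_le (by norm_num) (by linarith)) _
  · refine (ENNReal.rpow_add_le_add_rpow a b hp h1).trans ?_
    nth_rewrite 1 [← one_mul (a ^ p + b ^ p)]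
    gcongr
    calc (1 : ℝ≥0∞) = 2 ^ (0:ℝ) := by simp
    _ ≤ 2 ^ p := ENNReal.rpow_le_rpow_of_exponent_le (by norm_num) hp

lemma aux_self_mul {s : ℝ} (hs : 1 ≤ s) {a : ℝ≥0∞} (ha : a ≠ ⊤) :
    a ^ s = a * a ^ (s - 1) := by
  rcases eq_or_ne a 0 with rfl | ha0
  · rw [ENNReal.zero_rpow_of_pos (by linarith), zero_mul]
  · nth_rewrite 2 [← ENNReal.rpow_one a]
    rw [← ENNReal.rpow_add _ _ ha0 ha]
    ring_nf

lemma aux_jensen {Ω : Type} [MeasurableSpace Ω] (P : Measure Ω) [IsProbabilityMeasure P]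
    {s : ℝ} (hs : 1 ≤ s) {g : Ω → ℝ≥0∞} (hg : Measurable g) :
    ∫⁻ ω, g ω ^ (s - 1) ∂P ≤ (∫⁻ ω, g ω ^ s ∂P) ^ ((s - 1) / s) := by
  rcases eq_or_lt_of_le hs with rfl | hs1
  · simp
  · have hs0 : s ≠ 0 := by positivity
    have hs10 : s - 1 ≠ 0 := by linarith [hs1]
    have hconj : (s / (s-1)).HolderConjugate s := by
      rw [Real.holderConjugate_iff]
      constructor
      · rw [lt_div_iff₀ (by linarith)]; linarith
      · field_simp; ring
    have := ENNReal.lintegral_mul_le_Lp_mul_Lq P hconj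
      (f := fun ω => g ω ^ (s-1)) (g := fun _ => 1)
      ((hg.pow_const _).aemeasurable) aemeasurable_const
    simp only [Pi.mul_apply, mul_one, ENNReal.one_rpow, lintegral_one, measure_univ] at this
    refine this.trans_eq ?_
    rw [one_div_div]
    congr 1
    refine lintegral_congr fun ω => ?_
    rw [← ENNReal.rpow_mul]
    congr 1
    field_simp

/-- Rosenthal-type inequality for sums of independent nonnegative random variables:
for every `s ≥ 1` there is `K_s` such that for any finite family of independent
nonnegative random variables,
`E[(∑ᵢ Xᵢ)^s] ≤ K_s (∑ᵢ E[Xᵢ])^s + K_s ∑ᵢ E[Xᵢ^s]`. -/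
theorem stmt13 (s : ℝ) (hs : 1 ≤ s) :
    ∃ K : ℝ, ∀ {Ω : Type} [MeasurableSpace Ω] (P : Measure Ω), IsProbabilityMeasure P →
      ∀ {ι : Type} [Fintype ι] (X : ι → Ω → ℝ),
        (∀ i, Measurable (X i)) → (∀ i ω, 0 ≤ X i ω) →
        iIndepFun X P →
        (∀ i, Integrable (fun ω => X i ω ^ s) P) →
        ∫ ω, (∑ i, X i ω) ^ s ∂P
          ≤ K * (∑ i, ∫ ω, X i ω ∂P) ^ s + K * ∑ i, ∫ ω, X i ω ^ s ∂P := by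
  refine ⟨(2:ℝ) ^ (s*s + s), ?_⟩
  intro Ω _ P hP ι _ X hXm hX0 hXind hXint
  classical
  haveI := hP
  have hs0 : (0:ℝ) < s := by linarith
  have hs10 : (0:ℝ) ≤ s - 1 := by linarith
  set f : ι → Ω → ℝ≥0∞ := fun i ω => ENNReal.ofReal (X i ω) with hfdef
  have hfm : ∀ i, Measurable (f i) := fun i => ENNReal.measurable_ofReal.comp (hXm i)
  have hft : ∀ i ω, f i ω ≠ ⊤ := fun i ω => ENNReal.ofReal_ne_top
  set S : Ω → ℝ≥0∞ := fun ω => ∑ i, f i ω with hSdef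
  have hSm : Measurable S := Finset.measurable_sum _ (fun i _ => hfm i)
  have hSt : ∀ ω, S ω ≠ ⊤ := fun ω =>
    (ENNReal.sum_lt_top.2 (fun i _ => (hft i ω).lt_top)).ne
  set A := ∑ i, ∫⁻ ω, f i ω ∂P with hA
  set B := ∑ i, ∫⁻ ω, f i ω ^ s ∂P with hB
  set M := ∫⁻ ω, S ω ^ s ∂P with hM
  -- finiteness of the s-th moments
  have hBi : ∀ i, ∫⁻ ω, f i ω ^ s ∂P ≠ ⊤ := by
    intro i
    have h1 : (fun ω => ENNReal.ofReal (X i ω ^ s)) = fun ω => f i ω ^ s := by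
      funext ω; rw [ENNReal.ofReal_rpow_of_nonneg (hX0 i ω) hs0.le]
    have h2 := (hasFiniteIntegral_iff_ofReal
      (Filter.Eventually.of_forall fun ω => Real.rpow_nonneg (hX0 i ω) s)).1 (hXint i).2
    rw [h1] at h2
    exact h2.ne
  have hBne : B ≠ ⊤ := (ENNReal.sum_lt_top.2 (fun i _ => (hBi i).lt_top)).ne
  -- first moments are finite
  have hAi : ∀ i, ∫⁻ ω, f i ω ∂P ≤ 1 + ∫⁻ ω, f i ω ^ s ∂P := by
    intro i
    calc ∫⁻ ω, f i ω ∂P ≤ ∫⁻ ω, 1 + f i ω ^ s ∂P := by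
          refine lintegral_mono fun ω => ?_
          rcases le_total (f i ω) 1 with h | h
          · exact h.trans le_self_add
          · calc f i ω = f i ω ^ (1:ℝ) := (ENNReal.rpow_one _).symm
              _ ≤ f i ω ^ s := ENNReal.rpow_le_rpow_of_exponent_le h hs
              _ ≤ 1 + f i ω ^ s := le_add_self
      _ = 1 + ∫⁻ ω, f i ω ^ s ∂P := by
          rw [lintegral_add_left measurable_const, lintegral_one, measure_univ]
  have hAine : ∀ i, ∫⁻ ω, f i ω ∂P ≠ ⊤ := fun i =>
    ((hAi i).trans_lt (by simpa using (hBi i).lt_top)).ne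
  have hAne : A ≠ ⊤ := (ENNReal.sum_lt_top.2 (fun i _ => (hAine i).lt_top)).ne
  -- M is finite
  have hMne : M ≠ ⊤ := by
    have hpt : ∀ ω, S ω ^ s ≤ (Fintype.card ι : ℝ≥0∞) ^ s * ∑ i, f i ω ^ s := by
      intro ω
      have hT : ∀ i, f i ω ≤ (∑ j, f j ω ^ s) ^ (1/s) := by
        intro i
        have h1 : f i ω ^ s ≤ ∑ j, f j ω ^ s :=
          Finset.single_le_sum (f := fun j => f j ω ^ s) (fun j _ => zero_le) (Finset.mem_univ i)
        calc f i ω = (f i ω ^ s) ^ (1/s) := by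
              rw [← ENNReal.rpow_mul, mul_one_div, div_self hs0.ne', ENNReal.rpow_one]
          _ ≤ (∑ j, f j ω ^ s) ^ (1/s) := ENNReal.rpow_le_rpow h1 (by positivity)
      have h2 : S ω ≤ (Fintype.card ι : ℝ≥0∞) * (∑ j, f j ω ^ s) ^ (1/s) := by
        calc S ω ≤ ∑ _i : ι, (∑ j, f j ω ^ s) ^ (1/s) :=
              Finset.sum_le_sum (fun i _ => hT i)
          _ = (Fintype.card ι : ℝ≥0∞) * (∑ j, f j ω ^ s) ^ (1/s) := by
              rw [Finset.sum_const, nsmul_eq_mul, Finset.card_univ]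
      calc S ω ^ s ≤ ((Fintype.card ι : ℝ≥0∞) * (∑ j, f j ω ^ s) ^ (1/s)) ^ s :=
            ENNReal.rpow_le_rpow h2 hs0.le
        _ = (Fintype.card ι : ℝ≥0∞) ^ s * ∑ i, f i ω ^ s := by
            rw [ENNReal.mul_rpow_of_nonneg _ _ hs0.le, ← ENNReal.rpow_mul,
              one_div_mul_cancel hs0.ne', ENNReal.rpow_one]
    have hbound : M ≤ (Fintype.card ι : ℝ≥0∞) ^ s * B := calc
      M ≤ ∫⁻ ω, (Fintype.card ι : ℝ≥0∞) ^ s * ∑ i, f i ω ^ s ∂P :=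
          lintegral_mono hpt
      _ = (Fintype.card ι : ℝ≥0∞) ^ s * B := by
          rw [lintegral_const_mul _ (Finset.measurable_sum _ fun i _ => (hfm i).pow_const s),
            lintegral_finset_sum _ (fun i _ => (hfm i).pow_const s)]
    exact ne_top_of_le_ne_top (ENNReal.mul_ne_top
      (ENNReal.rpow_ne_top_of_nonneg hs0.le (ENNReal.natCast_ne_top _)) hBne) hbound
  -- independence for the ENNReal versions
  have hIndE : iIndepFun f P :=
    hXind.comp (fun _ => ENNReal.ofReal) (fun _ => ENNReal.measurable_ofReal)
  -- key self-bounding inequality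
  have hkey : M ≤ 2 ^ (s-1) * B + 2 ^ (s-1) * (A * M ^ ((s-1)/s)) := by
    have hsum : M = ∑ i, ∫⁻ ω, f i ω * S ω ^ (s-1) ∂P := by
      rw [hM, ← lintegral_finset_sum _ (f := fun i ω => f i ω * S ω ^ (s-1)) (fun i _ => (hfm i).mul (hSm.pow_const _))]
      refine lintegral_congr fun ω => ?_
      rw [aux_self_mul hs (hSt ω), show S ω = ∑ i, f i ω from rfl, Finset.sum_mul]
    have hper : ∀ i, ∫⁻ ω, f i ω * S ω ^ (s-1) ∂P ≤
        2 ^ (s-1) * (∫⁻ ω, f i ω ^ s ∂P + (∫⁻ ω, f i ω ∂P) * M ^ ((s-1)/s)) := by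
      intro i
      set g : Ω → ℝ≥0∞ := fun ω => ∑ j ∈ Finset.univ.erase i, f j ω with hgdef
      have hgm : Measurable g := Finset.measurable_sum _ (fun j _ => hfm j)
      have hsplit : ∀ ω, S ω = f i ω + g ω := fun ω =>
        (Finset.add_sum_erase _ _ (Finset.mem_univ i)).symm
      have hle : ∀ ω, f i ω * S ω ^ (s-1) ≤
          2 ^ (s-1) * (f i ω ^ s + f i ω * g ω ^ (s-1)) := by
        intro ω
        calc f i ω * S ω ^ (s-1)
            ≤ f i ω * (2 ^ (s-1) * (f i ω ^ (s-1) + g ω ^ (s-1))) := by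
              rw [hsplit ω]; exact mul_le_mul_right (aux_two_rpow hs10 _ _) _
          _ = 2 ^ (s-1) * (f i ω * f i ω ^ (s-1) + f i ω * g ω ^ (s-1)) := by ring
          _ = 2 ^ (s-1) * (f i ω ^ s + f i ω * g ω ^ (s-1)) := by
              rw [← aux_self_mul hs (hft i ω)]
      have hind : IndepFun (f i) (fun ω => g ω ^ (s-1)) P := by
        have h1 : IndepFun (∑ j ∈ Finset.univ.erase i, f j) (f i) P :=
          hIndE.indepFun_finset_sum_of_notMem hfm (Finset.notMem_erase i _)
        have h2 := h1.symm.comp measurable_id (measurable_id.pow_const (s-1))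
        convert h2 using 2
        simp [hgdef, Finset.sum_apply]
        simp [hgdef, Finset.sum_apply]
      have hmul : ∫⁻ ω, f i ω * g ω ^ (s-1) ∂P
          = (∫⁻ ω, f i ω ∂P) * ∫⁻ ω, g ω ^ (s-1) ∂P :=
        lintegral_mul_eq_lintegral_mul_lintegral_of_indepFun'' (hfm i).aemeasurable
          ((hgm.pow_const _).aemeasurable) hind
      have hgS : ∫⁻ ω, g ω ^ (s-1) ∂P ≤ M ^ ((s-1)/s) := by
        refine le_trans ?_ (aux_jensen P hs hSm)
        exact lintegral_mono fun ω => ENNReal.rpow_le_rpow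
          (by rw [hsplit ω]; exact le_add_self) hs10
      calc ∫⁻ ω, f i ω * S ω ^ (s-1) ∂P
          ≤ ∫⁻ ω, 2 ^ (s-1) * (f i ω ^ s + f i ω * g ω ^ (s-1)) ∂P := lintegral_mono hle
        _ = 2 ^ (s-1) * (∫⁻ ω, f i ω ^ s ∂P + ∫⁻ ω, f i ω * g ω ^ (s-1) ∂P) := by
            rw [lintegral_const_mul _ (f := fun ω => f i ω ^ s + f i ω * g ω ^ (s-1)) (((hfm i).pow_const s).add ((hfm i).mul (hgm.pow_const _))),
              lintegral_add_left ((hfm i).pow_const s)]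
        _ ≤ 2 ^ (s-1) * (∫⁻ ω, f i ω ^ s ∂P + (∫⁻ ω, f i ω ∂P) * M ^ ((s-1)/s)) := by
            rw [hmul]; gcongr
    calc M = ∑ i, ∫⁻ ω, f i ω * S ω ^ (s-1) ∂P := hsum
      _ ≤ ∑ i, 2 ^ (s-1) * (∫⁻ ω, f i ω ^ s ∂P + (∫⁻ ω, f i ω ∂P) * M ^ ((s-1)/s)) :=
          Finset.sum_le_sum fun i _ => hper i
      _ = 2 ^ (s-1) * B + 2 ^ (s-1) * (A * M ^ ((s-1)/s)) := by
          rw [← Finset.mul_sum, hB, hA, Finset.sum_add_distrib, ← Finset.sum_mul]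
          ring
  have hss : (0:ℝ) ≤ s*s + s := by nlinarith
  -- deduce M ≤ C*A^s + C*B with C = 2^(s*s+s)
  have hC : M ≤ 2 ^ (s*s+s) * A ^ s + 2 ^ (s*s+s) * B := by
    have h2s : (2:ℝ≥0∞) * 2 ^ (s-1) = 2 ^ s := by
      nth_rewrite 1 [← ENNReal.rpow_one 2]
      rw [← ENNReal.rpow_add _ _ (by norm_num) (by norm_num)]
      ring_nf
    rcases le_total (2 ^ (s-1) * (A * M ^ ((s-1)/s))) (2 ^ (s-1) * B) with h | h
    · have hMB : M ≤ 2 ^ s * B := by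
        calc M ≤ 2 ^ (s-1) * B + 2 ^ (s-1) * B := le_trans hkey (by gcongr)
          _ = 2 * (2 ^ (s-1) * B) := by ring
          _ = 2 ^ s * B := by rw [← mul_assoc, h2s]
      refine hMB.trans (le_add_of_nonneg_of_le zero_le ?_)
      exact mul_le_mul_left
        (ENNReal.rpow_le_rpow_of_exponent_le (by norm_num) (by nlinarith)) _
    · have hM2 : M ≤ 2 ^ s * (A * M ^ ((s-1)/s)) := by
        calc M ≤ 2 ^ (s-1) * (A * M ^ ((s-1)/s)) + 2 ^ (s-1) * (A * M ^ ((s-1)/s)) :=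
            le_trans hkey (by gcongr)
          _ = 2 * (2 ^ (s-1) * (A * M ^ ((s-1)/s))) := by ring
          _ = 2 ^ s * (A * M ^ ((s-1)/s)) := by rw [← mul_assoc, h2s]
      rcases eq_or_ne M 0 with hM0 | hM0
      · rw [hM0]; exact zero_le
      have hMrne : M ^ ((s-1)/s) ≠ ⊤ :=
        ENNReal.rpow_ne_top_of_nonneg (div_nonneg hs10 hs0.le) hMne
      have hMrne0 : M ^ ((s-1)/s) ≠ 0 :=
        (ENNReal.rpow_pos (pos_iff_ne_zero.2 hM0) hMne).ne'
      have hsplitM : M = M ^ (1/s) * M ^ ((s-1)/s) := by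
        rw [← ENNReal.rpow_add _ _ hM0 hMne,
          show 1/s + (s-1)/s = 1 by field_simp; ring, ENNReal.rpow_one]
      have hcancel : M ^ (1/s) ≤ 2 ^ s * A := by
        nth_rewrite 1 [hsplitM] at hM2
        rw [← mul_assoc] at hM2
        exact (ENNReal.mul_le_mul_iff_left hMrne0 hMrne).1 hM2
      calc M = (M ^ (1/s)) ^ s := by
            rw [← ENNReal.rpow_mul, one_div_mul_cancel hs0.ne', ENNReal.rpow_one]
        _ ≤ (2 ^ s * A) ^ s := ENNReal.rpow_le_rpow hcancel hs0.le
        _ = 2 ^ (s*s) * A ^ s := by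
            rw [ENNReal.mul_rpow_of_nonneg _ _ hs0.le, ← ENNReal.rpow_mul]
        _ ≤ 2 ^ (s*s+s) * A ^ s := mul_le_mul_left
            (ENNReal.rpow_le_rpow_of_exponent_le (by norm_num) (by linarith)) _
        _ ≤ 2 ^ (s*s+s) * A ^ s + 2 ^ (s*s+s) * B := le_self_add
  -- convert back to real Bochner integrals
  have hconv1 : ∫ ω, (∑ i, X i ω) ^ s ∂P = M.toReal := by
    rw [integral_eq_lintegral_of_nonneg_ae
      (Filter.Eventually.of_forall fun ω =>
        Real.rpow_nonneg (Finset.sum_nonneg fun i _ => hX0 i ω) s)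
      ((Finset.measurable_sum _ fun i _ => hXm i).pow_const s).aestronglyMeasurable, hM]
    congr 1
    refine lintegral_congr fun ω => ?_
    rw [← ENNReal.ofReal_rpow_of_nonneg (Finset.sum_nonneg fun i _ => hX0 i ω) hs0.le]
    congr 1
    exact ENNReal.ofReal_sum_of_nonneg (fun i _ => hX0 i ω)
  have hconv2 : ∀ i, ∫ ω, X i ω ∂P = (∫⁻ ω, f i ω ∂P).toReal := fun i => by
    rw [integral_eq_lintegral_of_nonneg_ae (Filter.Eventually.of_forall (hX0 i))
      (hXm i).aestronglyMeasurable]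
  have hconv3 : ∀ i, ∫ ω, X i ω ^ s ∂P = (∫⁻ ω, f i ω ^ s ∂P).toReal := fun i => by
    rw [integral_eq_lintegral_of_nonneg_ae
      (Filter.Eventually.of_forall fun ω => Real.rpow_nonneg (hX0 i ω) s)
      ((hXm i).pow_const s).aestronglyMeasurable]
    congr 1
    exact lintegral_congr fun ω => (ENNReal.ofReal_rpow_of_nonneg (hX0 i ω) hs0.le).symm
  rw [hconv1]
  simp_rw [hconv2, hconv3]
  rw [← ENNReal.toReal_sum (fun i _ => hAine i), ← ENNReal.toReal_sum (fun i _ => hBi i)]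
  have hCne : (2:ℝ≥0∞) ^ (s*s+s) ≠ ⊤ := ENNReal.rpow_ne_top_of_nonneg hss (by norm_num)
  have hAsne : A ^ s ≠ ⊤ := ENNReal.rpow_ne_top_of_nonneg hs0.le hAne
  have hRHS : ((2:ℝ≥0∞) ^ (s*s+s) * A ^ s + 2 ^ (s*s+s) * B).toReal
      = (2:ℝ) ^ (s*s+s) * A.toReal ^ s + (2:ℝ) ^ (s*s+s) * B.toReal := by
    rw [ENNReal.toReal_add (ENNReal.mul_ne_top hCne hAsne) (ENNReal.mul_ne_top hCne hBne),
      ENNReal.toReal_mul, ENNReal.toReal_mul]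
    simp only [← ENNReal.toReal_rpow]
    norm_num
  rw [← hA, ← hB, ← hRHS]
  exact ENNReal.toReal_mono
    (ENNReal.add_ne_top.2 ⟨ENNReal.mul_ne_top hCne hAsne, ENNReal.mul_ne_top hCne hBne⟩) hC
end
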